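/- Let k ≥ 1. Then the word τ_k^j(k) (the j-fold iterate of the substitution τ_k applied to the single letter k) equals the word k·1·2⋯j when 0 ≤ j ≤ k, and equals the concatenation τ_k^{j-1}(k) · τ_k^{j-k}(k) when j ≥ k. -/
import Mathlib


/-- The substitution τ_k, applied to a single letter: τ_k(k) = k1 and τ_k(i) = i+1 for i ≠ k. -/
def tauLetter (k i : ℕ) : List ℕ := if i = k then [k, 1] else [i + 1]

/-- The substitution τ_k, extended to finite words (lists of letters) by concatenation. -/
def tauWord (k : ℕ) (w : List ℕ) : List ℕ := w.flatMap (tauLetter k)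

/-- The infinite fixed point x_k of τ_k (starting with the letter k): its n-th letter is the
n-th letter of any sufficiently long iterate τ_k^j(k), here j = n+1. -/
def xk (k n : ℕ) : ℕ := ((tauWord k)^[n + 1] [k]).getD n 0

/-- L_k(n) = |τ_k(x_k[0:n))|, the length of the τ_k-image of the prefix of x_k of length n. -/
def Lk (k n : ℕ) : ℕ := (tauWord k ((List.range n).map (xk k))).length

/-- C_k^{(=i)}(n): the number of occurrences of the letter i among x_k[0],...,x_k[n-1]. -/
def Ceq (k i n : ℕ) : ℕ := ((Finset.range n).filter (fun m => xk k m = i)).card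

/-- C_k^{(>j)}(n): the number of positions m < n with x_k[m] > j. -/
def Cgt (k j n : ℕ) : ℕ := ((Finset.range n).filter (fun m => j < xk k m)).card


lemma tau_append (k : ℕ) (a b : List ℕ) : tauWord k (a ++ b) = tauWord k a ++ tauWord k b := by
  simp [tauWord]

lemma tau_range' (k : ℕ) : ∀ j s, s + j ≤ k → tauWord k (List.range' s j) = List.range' (s+1) j := by
  intro j
  induction j with
  | zero => simp [tauWord]
  | succ n ih =>
    intro s hs
    rw [List.range'_succ, List.range'_succ]
    have hne : s ≠ k := by omega
    have := ih (s+1) (by omega)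
    simp [tauWord, tauLetter, hne] at this ⊢
    exact this

lemma partA (k : ℕ) : ∀ j, j ≤ k → (tauWord k)^[j] [k] = k :: List.range' 1 j := by
  intro j
  induction j with
  | zero => simp
  | succ n ih =>
    intro h
    rw [Function.iterate_succ_apply', ih (by omega)]
    have : tauWord k (k :: List.range' 1 n) = tauWord k [k] ++ tauWord k (List.range' 1 n) := by
      simpa using tau_append k [k] (List.range' 1 n)
    rw [this, tau_range' k n 1 (by omega)]
    simp [tauWord, tauLetter, List.range'_succ]

/-- τ_k^j(k) equals the word k·1·2⋯j when 0 ≤ j ≤ k, and equals the concatenation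
τ_k^{j-1}(k) · τ_k^{j-k}(k) when j ≥ k. -/
theorem stmt1 (k : ℕ) (hk : 1 ≤ k) :
    (∀ j, j ≤ k → (tauWord k)^[j] [k] = k :: List.range' 1 j) ∧
    (∀ j, k ≤ j → (tauWord k)^[j] [k] = (tauWord k)^[j - 1] [k] ++ (tauWord k)^[j - k] [k]) := by

  refine ⟨partA k, ?_⟩
  intro j hj
  induction j, hj using Nat.le_induction with
  | base =>
    rw [partA k k le_rfl, partA k (k-1) (by omega), Nat.sub_self]
    have : List.range' 1 k = List.range' 1 (k-1) ++ [k] := by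
      have : k = (k - 1) + 1 := by omega
      rw [this, List.range'_concat]
      congr 1
      simp
      omega
    simp [this]
  | succ j hj ih =>
    rw [Function.iterate_succ_apply', ih, tau_append,
      ← Function.iterate_succ_apply' (tauWord k) (j-1),
      ← Function.iterate_succ_apply' (tauWord k) (j-k)]
    congr 2 <;> omega
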